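/- Let H = (V,E) be a finite graph with complex edge weights w_e. Then |C_H(w)| ≤ T_H(w') · ∏_{e∈E} max{1, |1+w_e|}, where w'_e = min{|w_e|, |w_e|/|1+w_e|} (interpreted as |w_e| when 1+w_e = 0), C_H(w) is the generating polynomial of connected spanning subgraphs of H, and T_H(w') is the generating polynomial of spanning trees of H with weights w'_e. -/

import Mathlib

/-- The spanning subgraph `(V, A)` of a multigraph with edge-endpoint map
`ends : E → Sym2 V` is connected. -/
def SpanningConnected {V E : Type*} (ends : E → Sym2 V) (A : Finset E) : Prop :=
  (SimpleGraph.fromEdgeSet (ends '' (A : Set E))).Connected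

/-- `(V, T)` is a spanning tree: connected with `|T| = |V| - 1`. -/
def SpanningTree {V E : Type*} [Fintype V] (ends : E → Sym2 V)
    (T : Finset E) : Prop :=
  SpanningConnected ends T ∧ T.card + 1 = Fintype.card V

/-- The effective edge weight `w'_e = min {|w_e|, |w_e|/|1+w_e|}`,
interpreted as `|w_e|` when `1 + w_e = 0`. -/
noncomputable def effWeight (w : ℂ) : ℝ :=
  if 1 + w = 0 then norm w
  else min (norm w) (norm w / norm (1 + w))

namespace PenroseAux

open Finset SimpleGraph

variable {V E : Type*}

/-- The simple graph generated by a finite set of multigraph edges. -/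
def GG (ends : E → Sym2 V) (S : Finset E) : SimpleGraph V :=
  SimpleGraph.fromEdgeSet (ends '' (S : Set E))

lemma GG_mono (ends : E → Sym2 V) {S T : Finset E} (h : S ⊆ T) : GG ends S ≤ GG ends T :=
  fromEdgeSet_mono (Set.image_mono h)

/-- Endpoints of `e` are connected in the graph generated by `S`. -/
def conn (ends : E → Sym2 V) (S : Finset E) (e : E) : Prop :=
  ∀ x y : V, ends e = s(x, y) → (GG ends S).Reachable x y

lemma conn.mono {ends : E → Sym2 V} {S T : Finset E} (h : S ⊆ T) {e : E}
    (hc : conn ends S e) : conn ends T e :=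
  fun x y hxy => (hc x y hxy).mono (GG_mono ends h)

lemma conn_of_mem {ends : E → Sym2 V} {S : Finset E} {f e : E} (hf : f ∈ S)
    (hfe : ends f = ends e) : conn ends S e := by
  intro x y hxy
  by_cases hxyeq : x = y
  · subst hxyeq; exact Reachable.refl x
  · exact SimpleGraph.Adj.reachable (by
      rw [GG, fromEdgeSet_adj]
      exact ⟨⟨f, by simpa using hf, by rw [hfe, hxy]⟩, hxyeq⟩)

/-- Transfer reachability from the graph of `S` to the graph of `T`, provided every edge
of `S` has its endpoints connected in the graph of `T`. -/
lemma reach_transfer {ends : E → Sym2 V} {S T : Finset E}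
    (H : ∀ f ∈ S, conn ends T f) {u v : V}
    (h : (GG ends S).Reachable u v) : (GG ends T).Reachable u v := by
  obtain ⟨p⟩ := h
  induction p with
  | nil => exact Reachable.refl _
  | @cons a b c hadj q ih =>
    rw [GG, fromEdgeSet_adj] at hadj
    obtain ⟨⟨f, hfS, hf⟩, -⟩ := hadj
    exact (H f (by simpa using hfS) a b hf).trans ih

variable [LinearOrder E]

/-- The set of elements of `S` smaller than `e`. -/
def below (S : Finset E) (e : E) : Finset E := S.filter (fun f => f < e)

lemma mem_below {S : Finset E} {f e : E} : f ∈ below S e ↔ f ∈ S ∧ f < e :=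
  Finset.mem_filter

lemma below_subset {S : Finset E} {e : E} : below S e ⊆ S := Finset.filter_subset _ _

lemma below_mono_left {S T : Finset E} (h : S ⊆ T) (e : E) : below S e ⊆ below T e := by
  intro f hf; rw [mem_below] at hf ⊢; exact ⟨h hf.1, hf.2⟩

lemma below_mono_right {S : Finset E} {f e : E} (h : f ≤ e) : below S f ⊆ below S e := by
  intro g hg; rw [mem_below] at hg ⊢; exact ⟨hg.1, lt_of_lt_of_le hg.2 h⟩

open scoped Classical in
/-- The greedy (Kruskal) spanning forest of `A` : keep an edge iff its endpoints are not
connected by the smaller edges of `A`. -/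
noncomputable def tau (ends : E → Sym2 V) (A : Finset E) : Finset E :=
  A.filter (fun e => ¬ conn ends (below A e) e)

lemma mem_tau {ends : E → Sym2 V} {A : Finset E} {e : E} :
    e ∈ tau ends A ↔ e ∈ A ∧ ¬ conn ends (below A e) e := by
  classical
  simp [tau, Finset.mem_filter]

lemma tau_subset {ends : E → Sym2 V} {A : Finset E} : tau ends A ⊆ A :=
  fun e he => (mem_tau.mp he).1

/-- Key lemma: a non-tree edge of `A` has its endpoints connected using smaller tree edges. -/
lemma conn_tau_of_not_mem {ends : E → Sym2 V} {A : Finset E} [WellFoundedLT E] :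
    ∀ e, e ∈ A → e ∉ tau ends A → conn ends (below (tau ends A) e) e := by
  intro e
  induction e using WellFoundedLT.induction with
  | _ e ih =>
    intro heA het
    have h1 : conn ends (below A e) e := by
      by_contra h; exact het (mem_tau.mpr ⟨heA, h⟩)
    intro x y hxy
    refine reach_transfer ?_ (h1 x y hxy)
    intro f hf
    obtain ⟨hfA, hfe⟩ := mem_below.mp hf
    by_cases hft : f ∈ tau ends A
    · exact conn_of_mem (mem_below.mpr ⟨hft, hfe⟩) rfl
    · exact (ih f hfe hfA hft).mono (below_mono_right (le_of_lt hfe))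

lemma reach_tau {ends : E → Sym2 V} {A : Finset E} [WellFoundedLT E] {u v : V}
    (h : (GG ends A).Reachable u v) : (GG ends (tau ends A)).Reachable u v := by
  refine reach_transfer ?_ h
  intro f hf
  by_cases hft : f ∈ tau ends A
  · exact conn_of_mem hft rfl
  · exact (conn_tau_of_not_mem f hf hft).mono below_subset

/-- Independence (forest) property of an edge set. -/
def Ind (ends : E → Sym2 V) (T : Finset E) : Prop :=
  ∀ e ∈ T, ¬ conn ends (below T e) e

lemma ind_tau {ends : E → Sym2 V} {A : Finset E} : Ind ends (tau ends A) := by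
  intro e he hc
  exact (mem_tau.mp he).2 (hc.mono (below_mono_left tau_subset e))

lemma sym2_repr (z : Sym2 V) : ∃ x y : V, z = s(x, y) :=
  Sym2.ind (fun x y => ⟨x, y, rfl⟩) z

lemma ind_not_diag {ends : E → Sym2 V} {T : Finset E} (hT : Ind ends T) {e : E}
    (he : e ∈ T) : ¬ (ends e).IsDiag := by
  intro hd
  refine hT e he ?_
  intro x y hxy
  rw [hxy] at hd
  rw [Sym2.mk_isDiag_iff] at hd
  rw [hd]

lemma ind_injOn {ends : E → Sym2 V} {T : Finset E} (hT : Ind ends T) :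
    ∀ e ∈ T, ∀ f ∈ T, ends e = ends f → e = f := by
  intro e he f hf hef
  by_contra hne
  rcases lt_or_gt_of_ne hne with h | h
  · exact hT f hf (conn_of_mem (mem_below.mpr ⟨he, h⟩) hef)
  · exact hT e he (conn_of_mem (mem_below.mpr ⟨hf, h⟩) hef.symm)

lemma ind_isAcyclic {ends : E → Sym2 V} {T : Finset E} (hT : Ind ends T) :
    (GG ends T).IsAcyclic := by
  classical
  intro v c hc
  set S : Finset E := T.filter (fun f => ends f ∈ c.edges) with hSdef
  have hSsub : S ⊆ T := Finset.filter_subset _ _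
  have hedges : ∀ a, a ∈ c.edges → a ∈ (GG ends S).edgeSet := by
    intro a ha
    have h1 : a ∈ (GG ends T).edgeSet := c.edges_subset_edgeSet ha
    rw [GG, edgeSet_fromEdgeSet] at h1 ⊢
    obtain ⟨⟨f, hfT, hfa⟩, hnd⟩ := h1
    refine ⟨⟨f, ?_, hfa⟩, hnd⟩
    simp only [Finset.coe_filter, Set.mem_setOf_eq, hSdef]
    exact ⟨by simpa using hfT, by rw [hfa]; exact ha⟩
  have hSne : S.Nonempty := by
    have hlen : 0 < c.edges.length := by
      rw [c.length_edges]
      have := hc.three_le_length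
      omega
    obtain ⟨a, ha⟩ := List.exists_mem_of_length_pos hlen
    have h1 : a ∈ (GG ends T).edgeSet := c.edges_subset_edgeSet ha
    rw [GG, edgeSet_fromEdgeSet] at h1
    obtain ⟨⟨f, hfT, hfa⟩, -⟩ := h1
    exact ⟨f, by
      simp only [hSdef, Finset.mem_filter]
      exact ⟨by simpa using hfT, by rw [hfa]; exact ha⟩⟩
  set g : E := S.max' hSne with hgdef
  have hgS : g ∈ S := S.max'_mem hSne
  have hgT : g ∈ T := hSsub hgS
  have hgc : ends g ∈ c.edges := (Finset.mem_filter.mp hgS).2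
  obtain ⟨x, y, hxy⟩ := sym2_repr (ends g)
  have hnd : ¬ (ends g).IsDiag := ind_not_diag hT hgT
  have hxyne : x ≠ y := by
    rw [hxy, Sym2.mk_isDiag_iff] at hnd; exact hnd
  have hreach : ((GG ends S) \ SimpleGraph.fromEdgeSet {s(x, y)}).Reachable x y := by
    have := (SimpleGraph.adj_and_reachable_delete_edges_iff_exists_cycle
      (G := GG ends S) (v := x) (w := y)).mpr
      ⟨v, c.transfer (GG ends S) hedges, hc.transfer hedges, by
        rw [SimpleGraph.Walk.edges_transfer]; rw [← hxy]; exact hgc⟩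
    exact this.2
  have hle : (GG ends S) \ SimpleGraph.fromEdgeSet {s(x, y)} ≤ GG ends (below T g) := by
    intro a b hab
    rw [SimpleGraph.sdiff_adj] at hab
    obtain ⟨hab1, hab2⟩ := hab
    rw [GG, fromEdgeSet_adj] at hab1
    obtain ⟨⟨f, hfS, hfab⟩, habne⟩ := hab1
    have hfS' : f ∈ S := by simpa using hfS
    have hfg : f ≠ g := by
      intro h
      apply hab2
      rw [fromEdgeSet_adj]
      refine ⟨?_, habne⟩
      rw [Set.mem_singleton_iff, ← hfab, h, hxy]
    have hflt : f < g := lt_of_le_of_ne (S.le_max' f hfS') hfg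
    rw [GG, fromEdgeSet_adj]
    exact ⟨⟨f, by simp [mem_below, hSsub hfS', hflt], hfab⟩, habne⟩
  refine hT g hgT ?_
  intro x' y' hxy'
  have : s(x, y) = s(x', y') := by rw [← hxy, hxy']
  have hr : (GG ends (below T g)).Reachable x y := hreach.mono hle
  rw [Sym2.eq_iff] at this
  rcases this with ⟨hx, hy⟩ | ⟨hx, hy⟩
  · rw [← hx, ← hy]; exact hr
  · rw [← hx, ← hy]; exact hr.symm

lemma ind_card [Fintype V] {ends : E → Sym2 V} {T : Finset E} (hT : Ind ends T)
    (hc : (GG ends T).Connected) : T.card + 1 = Fintype.card V := by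
  classical
  have htree : (GG ends T).IsTree := ⟨hc, ind_isAcyclic hT⟩
  have hfin : Fintype ((GG ends T).edgeSet) := Fintype.ofFinite _
  have hcard := htree.card_edgeFinset
  have hE : (GG ends T).edgeFinset = T.image ends := by
    ext a
    rw [SimpleGraph.mem_edgeFinset, GG, edgeSet_fromEdgeSet]
    constructor
    · rintro ⟨⟨f, hfT, hfa⟩, -⟩
      exact Finset.mem_image.mpr ⟨f, by simpa using hfT, hfa⟩
    · rintro ha
      obtain ⟨f, hfT, hfa⟩ := Finset.mem_image.mp ha
      refine ⟨⟨f, by simpa using hfT, hfa⟩, ?_⟩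
      rw [← hfa]
      exact ind_not_diag hT hfT
  rw [hE, Finset.card_image_of_injOn (fun e he f hf hef => ind_injOn hT e he f hf hef)]
    at hcard
  exact hcard

open scoped Classical in
/-- The Penrose interval top associated with a tree `T`. -/
noncomputable def Rset [Fintype E] (ends : E → Sym2 V) (T : Finset E) : Finset E :=
  Finset.univ.filter (fun e => e ∈ T ∨ conn ends (below T e) e)

lemma mem_Rset [Fintype E] {ends : E → Sym2 V} {T : Finset E} {e : E} :
    e ∈ Rset ends T ↔ e ∈ T ∨ conn ends (below T e) e := by
  classical
  simp [Rset]

lemma subset_Rset [Fintype E] {ends : E → Sym2 V} {T : Finset E} : T ⊆ Rset ends T :=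
  fun e he => mem_Rset.mpr (Or.inl he)

/-- The fiber of `tau` over a tree `T` is exactly the interval `[T, Rset T]`. -/
lemma fiber_eq [Fintype E] [WellFoundedLT E] {ends : E → Sym2 V} {T : Finset E}
    (hT : Ind ends T) (hTc : (GG ends T).Connected) (A : Finset E) :
    ((GG ends A).Connected ∧ tau ends A = T) ↔ (T ⊆ A ∧ A ⊆ Rset ends T) := by
  constructor
  · rintro ⟨hAc, rfl⟩
    refine ⟨tau_subset, ?_⟩
    intro e heA
    by_cases het : e ∈ tau ends A
    · exact mem_Rset.mpr (Or.inl het)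
    · exact mem_Rset.mpr (Or.inr (conn_tau_of_not_mem e heA het))
  · rintro ⟨hTA, hAR⟩
    have hconn_edges : ∀ f ∈ A, conn ends T f := by
      intro f hf
      by_cases hft : f ∈ T
      · exact conn_of_mem hft rfl
      · rcases mem_Rset.mp (hAR hf) with h | h
        · exact absurd h hft
        · exact h.mono below_subset
    have hAc : (GG ends A).Connected := by
      rw [SimpleGraph.connected_iff] at hTc ⊢
      exact ⟨fun u v => ((hTc.1 u v).mono (GG_mono ends hTA)), hTc.2⟩
    refine ⟨hAc, ?_⟩
    have htrans : ∀ e : E, conn ends (below A e) e → conn ends (below T e) e := by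
      intro e hcA x y hxy
      refine reach_transfer ?_ (hcA x y hxy)
      intro f hf
      obtain ⟨hfA, hfe⟩ := mem_below.mp hf
      by_cases hft : f ∈ T
      · exact conn_of_mem (mem_below.mpr ⟨hft, hfe⟩) rfl
      · rcases mem_Rset.mp (hAR hfA) with h | h
        · exact absurd h hft
        · exact h.mono (below_mono_right (le_of_lt hfe))
    ext e
    rw [mem_tau]
    constructor
    · rintro ⟨heA, hnc⟩
      by_contra het
      rcases mem_Rset.mp (hAR heA) with h | h
      · exact het h
      · exact hnc (h.mono (below_mono_left hTA e))
    · intro heT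
      refine ⟨hTA heT, fun hcA => hT e heT (htrans e hcA)⟩

open scoped Classical in
/-- Summing the edge-weight products over a Boolean interval `[T, R]`. -/
lemma sum_interval [Fintype E] (T R : Finset E) (hTR : T ⊆ R) (w : E → ℂ) :
    ∑ A ∈ Finset.univ.filter (fun A : Finset E => T ⊆ A ∧ A ⊆ R), ∏ e ∈ A, w e
      = (∏ e ∈ T, w e) * ∏ e ∈ R \ T, (1 + w e) := by
  classical
  have h2 : ∏ e ∈ R \ T, (1 + w e) = ∑ B ∈ (R \ T).powerset, ∏ e ∈ B, w e := by
    rw [Finset.prod_congr rfl (fun x _ => add_comm 1 (w x)), Finset.prod_add]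
    simp
  rw [h2, Finset.mul_sum]
  refine Finset.sum_nbij' (fun A => A \ T) (fun B => T ∪ B) ?_ ?_ ?_ ?_ ?_
  · intro A hA
    rw [Finset.mem_filter] at hA
    exact Finset.mem_powerset.mpr (Finset.sdiff_subset_sdiff hA.2.2 (le_refl _))
  · intro B hB
    rw [Finset.mem_powerset] at hB
    refine Finset.mem_filter.mpr ⟨Finset.mem_univ _, Finset.subset_union_left,
      Finset.union_subset hTR (hB.trans (Finset.sdiff_subset))⟩
  · intro A hA
    rw [Finset.mem_filter] at hA
    exact Finset.union_sdiff_of_subset hA.2.1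
  · intro B hB
    rw [Finset.mem_powerset] at hB
    show (T ∪ B) \ T = B
    rw [Finset.union_sdiff_cancel_left
      (Finset.disjoint_of_subset_right hB Finset.disjoint_sdiff)]
  · intro A hA
    rw [Finset.mem_filter] at hA
    rw [← Finset.prod_union Finset.disjoint_sdiff, Finset.union_sdiff_of_subset hA.2.1]

lemma effWeight_nonneg (z : ℂ) : 0 ≤ effWeight z := by
  unfold effWeight
  split
  · exact norm_nonneg _
  · exact le_min (norm_nonneg _)
      (div_nonneg (norm_nonneg _) (norm_nonneg _))

lemma abs_eq_eff_mul_max (z : ℂ) :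
    norm z = effWeight z * max 1 (norm (1 + z)) := by
  unfold effWeight
  by_cases h0 : 1 + z = 0
  · rw [if_pos h0, h0]; simp
  · rw [if_neg h0]
    have hpos : 0 < norm (1 + z) := norm_pos_iff.mpr h0
    rcases le_or_gt (norm (1 + z)) 1 with h1 | h1
    · rw [max_eq_left h1, mul_one, min_eq_left]
      rw [le_div_iff₀ hpos]
      exact mul_le_of_le_one_right (norm_nonneg _) h1
    · rw [max_eq_right h1.le, min_eq_right, div_mul_cancel₀ _ (ne_of_gt hpos)]
      exact div_le_self (norm_nonneg _) h1.le

lemma tree_term_bound [Fintype E] (w : E → ℂ) (T R : Finset E) :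
    norm ((∏ e ∈ T, w e) * ∏ e ∈ R \ T, (1 + w e)) ≤
      (∏ e ∈ T, effWeight (w e)) * ∏ e : E, max 1 (norm (1 + w e)) := by
  rw [norm_mul, norm_prod, norm_prod]
  have heq : ∏ e ∈ T, norm (w e)
      = (∏ e ∈ T, effWeight (w e)) * ∏ e ∈ T, max 1 (norm (1 + w e)) := by
    rw [← Finset.prod_mul_distrib]
    exact Finset.prod_congr rfl (fun e _ => abs_eq_eff_mul_max (w e))
  rw [heq, mul_assoc]
  refine mul_le_mul_of_nonneg_left ?_
    (Finset.prod_nonneg (fun e _ => effWeight_nonneg _))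
  calc (∏ e ∈ T, max 1 (norm (1 + w e))) * ∏ e ∈ R \ T, norm (1 + w e)
      ≤ (∏ e ∈ T, max 1 (norm (1 + w e)))
          * ∏ e ∈ R \ T, max 1 (norm (1 + w e)) := by
        refine mul_le_mul_of_nonneg_left
          (Finset.prod_le_prod (fun e _ => norm_nonneg _)
            (fun e _ => le_max_right _ _)) ?_
        exact Finset.prod_nonneg (fun e _ => le_trans zero_le_one (le_max_left _ _))
    _ = ∏ e ∈ T ∪ (R \ T), max 1 (norm (1 + w e)) :=
        (Finset.prod_union Finset.disjoint_sdiff).symm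
    _ ≤ ∏ e : E, max 1 (norm (1 + w e)) := by
        have hone : (1:ℝ) ≤ ∏ e ∈ Finset.univ \ (T ∪ (R \ T)), max 1 (norm (1 + w e)) := by
          calc (1:ℝ) = ∏ e ∈ Finset.univ \ (T ∪ (R \ T)), 1 := by simp
            _ ≤ _ := Finset.prod_le_prod (fun e _ => zero_le_one)
                (fun e _ => le_max_left _ _)
        calc ∏ e ∈ T ∪ (R \ T), max 1 (norm (1 + w e))
            = 1 * ∏ e ∈ T ∪ (R \ T), max 1 (norm (1 + w e)) := (one_mul _).symm
          _ ≤ (∏ e ∈ Finset.univ \ (T ∪ (R \ T)), max 1 (norm (1 + w e)))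
              * ∏ e ∈ T ∪ (R \ T), max 1 (norm (1 + w e)) :=
              mul_le_mul_of_nonneg_right hone
                (Finset.prod_nonneg (fun e _ => le_trans zero_le_one (le_max_left _ _)))
          _ = ∏ e : E, max 1 (norm (1 + w e)) :=
              Finset.prod_sdiff (Finset.subset_univ _)

end PenroseAux

open scoped Classical in
/-- Extended Penrose inequality:
`|C_H(w)| ≤ T_H(w') · ∏_{e ∈ E} max{1, |1+w_e|}`. -/
theorem stmt_15 {V E : Type*} [Fintype V] [Fintype E] (ends : E → Sym2 V)
    (w : E → ℂ) :
    norm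
        (∑ A ∈ Finset.univ.filter (fun A : Finset E => SpanningConnected ends A),
          ∏ e ∈ A, w e) ≤
      (∑ T ∈ Finset.univ.filter (fun T : Finset E => SpanningTree ends T),
          ∏ e ∈ T, effWeight (w e)) *
        ∏ e : E, max 1 (norm (1 + w e)) := by
  classical
  letI : LinearOrder E := LinearOrder.lift' (Fintype.equivFin E) (Fintype.equivFin E).injective
  letI : WellFoundedLT E := Finite.to_wellFoundedLT
  open PenroseAux in
  set C : Finset (Finset E) :=
    Finset.univ.filter (fun A : Finset E => SpanningConnected ends A) with hC
  have hconn : ∀ A ∈ C, (PenroseAux.GG ends A).Connected := by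
    intro A hA
    exact (Finset.mem_filter.mp hA).2
  have htauconn : ∀ A ∈ C, (PenroseAux.GG ends (PenroseAux.tau ends A)).Connected := by
    intro A hA
    have hAc := hconn A hA
    rw [SimpleGraph.connected_iff] at hAc ⊢
    exact ⟨fun u v => PenroseAux.reach_tau (hAc.1 u v), hAc.2⟩
  have hkey : ∀ A ∈ C,
      (∏ e ∈ PenroseAux.tau ends A, w e)
          * ∏ e ∈ PenroseAux.Rset ends (PenroseAux.tau ends A) \ PenroseAux.tau ends A,
              (1 + w e)
        = ∑ A' ∈ C.filter (fun A' => PenroseAux.tau ends A' = PenroseAux.tau ends A),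
            ∏ e ∈ A', w e := by
    intro A hA
    have hfil : C.filter (fun A' => PenroseAux.tau ends A' = PenroseAux.tau ends A)
        = Finset.univ.filter (fun A' => PenroseAux.tau ends A ⊆ A'
            ∧ A' ⊆ PenroseAux.Rset ends (PenroseAux.tau ends A)) := by
      ext A'
      rw [hC, Finset.mem_filter, Finset.mem_filter, Finset.mem_filter]
      constructor
      · rintro ⟨⟨h1, h2⟩, h3⟩
        exact ⟨h1, (PenroseAux.fiber_eq PenroseAux.ind_tau (htauconn A hA) A').mp ⟨h2, h3⟩⟩
      · rintro ⟨h1, h2, h3⟩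
        have := (PenroseAux.fiber_eq PenroseAux.ind_tau (htauconn A hA) A').mpr ⟨h2, h3⟩
        exact ⟨⟨h1, this.1⟩, this.2⟩
    rw [hfil, PenroseAux.sum_interval _ _ PenroseAux.subset_Rset w]
  have h1 : (∑ A ∈ C, ∏ e ∈ A, w e)
      = ∑ T ∈ C.image (PenroseAux.tau ends),
          (∏ e ∈ T, w e) * ∏ e ∈ PenroseAux.Rset ends T \ T, (1 + w e) :=
    (Finset.sum_image' _ hkey).symm
  have himg : C.image (PenroseAux.tau ends)
      ⊆ Finset.univ.filter (fun T : Finset E => SpanningTree ends T) := by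
    intro T hT
    obtain ⟨A, hA, rfl⟩ := Finset.mem_image.mp hT
    refine Finset.mem_filter.mpr ⟨Finset.mem_univ _, htauconn A hA,
      PenroseAux.ind_card PenroseAux.ind_tau (htauconn A hA)⟩
  calc norm (∑ A ∈ C, ∏ e ∈ A, w e)
      = norm (∑ T ∈ C.image (PenroseAux.tau ends),
          (∏ e ∈ T, w e) * ∏ e ∈ PenroseAux.Rset ends T \ T, (1 + w e)) := by rw [h1]
    _ ≤ ∑ T ∈ C.image (PenroseAux.tau ends),
          norm ((∏ e ∈ T, w e) * ∏ e ∈ PenroseAux.Rset ends T \ T, (1 + w e)) :=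
        norm_sum_le _ _
    _ ≤ ∑ T ∈ C.image (PenroseAux.tau ends),
          (∏ e ∈ T, effWeight (w e)) * ∏ e : E, max 1 (norm (1 + w e)) :=
        Finset.sum_le_sum (fun T _ => PenroseAux.tree_term_bound w T _)
    _ = (∑ T ∈ C.image (PenroseAux.tau ends), ∏ e ∈ T, effWeight (w e))
          * ∏ e : E, max 1 (norm (1 + w e)) := by
        rw [← Finset.sum_mul]
    _ ≤ (∑ T ∈ Finset.univ.filter (fun T : Finset E => SpanningTree ends T),
          ∏ e ∈ T, effWeight (w e)) * ∏ e : E, max 1 (norm (1 + w e)) := by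
        refine mul_le_mul_of_nonneg_right
          (Finset.sum_le_sum_of_subset_of_nonneg himg (fun T _ _ =>
            Finset.prod_nonneg (fun e _ => PenroseAux.effWeight_nonneg _))) ?_
        exact Finset.prod_nonneg (fun e _ => le_trans zero_le_one (le_max_left _ _))
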